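/- If rank O(A,[C_i;C_j]) = rank O(A,C_i), then the row space of O(A,C_j) is contained in the row space of O(A,C_i); consequently, for any additional output C_k, rank O(A,[C_i;C_k]) = rank O(A,[C_i;C_j;C_k]). -/
import Mathlib


/-- The observability matrix `O(A, C) = [C; CA; …; CA^{n−1}]` of the pair `(A, C)`,
with the rows of `C A^k` stacked for `k = 0, …, n−1`. -/
noncomputable def obsMat {n : ℕ} {m : Type*} (A : Matrix (Fin n) (Fin n) ℝ)
    (C : Matrix m (Fin n) ℝ) : Matrix (Fin n × m) (Fin n) ℝ :=
  Matrix.of fun p j => (C * A ^ (p.1 : ℕ)) p.2 j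

lemma obsMat_fromRows_range {n : ℕ} {m₁ m₂ : Type*} (A : Matrix (Fin n) (Fin n) ℝ)
    (B : Matrix m₁ (Fin n) ℝ) (C : Matrix m₂ (Fin n) ℝ) :
    Set.range (obsMat A (Matrix.fromRows B C)) =
      Set.range (obsMat A B) ∪ Set.range (obsMat A C) := by
  ext x
  constructor
  · rintro ⟨⟨k, p⟩, rfl⟩
    cases p with
    | inl i =>
      left; exact ⟨(k, i), by funext j; simp [obsMat, Matrix.fromRows_mul]⟩
    | inr j =>
      right; exact ⟨(k, j), by funext l; simp [obsMat, Matrix.fromRows_mul]⟩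
  · rintro (⟨⟨k, i⟩, rfl⟩ | ⟨⟨k, j⟩, rfl⟩)
    · exact ⟨(k, Sum.inl i), by funext l; simp [obsMat, Matrix.fromRows_mul]⟩
    · exact ⟨(k, Sum.inr j), by funext l; simp [obsMat, Matrix.fromRows_mul]⟩

/-- If `rank O(A,[C_i;C_j]) = rank O(A,C_i)`, then the row space of `O(A,C_j)` is
contained in that of `O(A,C_i)`; consequently, for any further output `C_k`,
`rank O(A,[C_i;C_k]) = rank O(A,[C_i;C_j;C_k])`. -/
theorem rowspace_containment {n : ℕ} (A : Matrix (Fin n) (Fin n) ℝ)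
    (Ci Cj Ck : Matrix (Fin 1) (Fin n) ℝ)
    (h : (obsMat A (Matrix.fromRows Ci Cj)).rank = (obsMat A Ci).rank) :
    Submodule.span ℝ (Set.range (obsMat A Cj)) ≤
        Submodule.span ℝ (Set.range (obsMat A Ci)) ∧
      (obsMat A (Matrix.fromRows Ci Ck)).rank =
        (obsMat A (Matrix.fromRows Ci (Matrix.fromRows Cj Ck))).rank := by
  set Si := Submodule.span ℝ (Set.range (obsMat A Ci)) with hSi
  set Sj := Submodule.span ℝ (Set.range (obsMat A Cj)) with hSj
  set Sk := Submodule.span ℝ (Set.range (obsMat A Ck)) with hSk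
  have hij : Submodule.span ℝ (Set.range (obsMat A (Matrix.fromRows Ci Cj))) = Si ⊔ Sj := by
    rw [obsMat_fromRows_range, Submodule.span_union]
  have hrank : ∀ {m : Type} [Fintype m] (C : Matrix m (Fin n) ℝ),
      (obsMat A C).rank = Module.finrank ℝ (Submodule.span ℝ (Set.range (obsMat A C))) :=
    fun C => Matrix.rank_eq_finrank_span_row _
  have h1 : Module.finrank ℝ (Si ⊔ Sj : Submodule ℝ _) = Module.finrank ℝ Si := by
    have := h
    rwa [hrank, hrank, hij] at this
  have hle : Sj ≤ Si := by
    have heq : Si = Si ⊔ Sj :=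
      Submodule.eq_of_le_of_finrank_le le_sup_left (le_of_eq h1)
    rw [heq]; exact le_sup_right
  refine ⟨hle, ?_⟩
  have heq2 : Submodule.span ℝ (Set.range (obsMat A (Matrix.fromRows Ci Ck))) =
      Submodule.span ℝ (Set.range (obsMat A (Matrix.fromRows Ci (Matrix.fromRows Cj Ck)))) := by
    rw [obsMat_fromRows_range, Submodule.span_union, obsMat_fromRows_range, Submodule.span_union,
      obsMat_fromRows_range, Submodule.span_union, ← hSi, ← hSj, ← hSk, ← sup_assoc,
      sup_eq_left.mpr hle]
  rw [hrank, hrank, heq2]
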